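/- arXiv:1102.2813 — 2 statements merged into one kernel-verified Lean document; each statement's English description precedes it below -/
import Mathlib

section
/- Let Z be a finite-dimensional vector subspace of formal power series in n variables. Then the restriction of the standard sesquilinear form S to Z↓ × Z is non-degenerate: no nonzero element of Z annihilates all of Z↓, and no nonzero element of Z↓ annihilates all of Z. -/
noncomputable def degF {n : ℕ} (ν : Fin n →₀ ℕ) : ℕ := ν.sum fun _ k => k

noncomputable def pairS {n : ℕ} (p : MvPolynomial (Fin n) ℂ) (f : MvPowerSeries (Fin n) ℂ) : ℂ :=
  ∑ ν ∈ p.support,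
    ((∏ i, Nat.factorial (ν i) : ℕ) : ℂ) * MvPolynomial.coeff ν p *
      (starRingEnd ℂ) (MvPowerSeries.coeff ν f)

noncomputable def leastPartD {n : ℕ} (f : MvPowerSeries (Fin n) ℂ) (d : ℕ) :
    MvPolynomial (Fin n) ℂ :=
  ∑ ν ∈ (Finset.Iic ((Finsupp.equivFunOnFinite.symm fun _ => d) : Fin n →₀ ℕ)).filter
      (fun ν => degF ν = d),
    MvPolynomial.monomial ν (MvPowerSeries.coeff ν f)

noncomputable def ordPS {n : ℕ} (f : MvPowerSeries (Fin n) ℂ) : ℕ :=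
  sInf {d | ∃ ν, degF ν = d ∧ MvPowerSeries.coeff ν f ≠ 0}

noncomputable def leastPart {n : ℕ} (f : MvPowerSeries (Fin n) ℂ) : MvPolynomial (Fin n) ℂ :=
  leastPartD f (ordPS f)

noncomputable def leastSpace {n : ℕ} (Z : Submodule ℂ (MvPowerSeries (Fin n) ℂ)) :
    Submodule ℂ (MvPolynomial (Fin n) ℂ) :=
  Submodule.span ℂ (leastPart '' (Z : Set (MvPowerSeries (Fin n) ℂ)))

def DInvP {n : ℕ} (W : Submodule ℂ (MvPolynomial (Fin n) ℂ)) : Prop :=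
  ∀ p ∈ W, ∀ i, MvPolynomial.pderiv i p ∈ W

noncomputable def pderivPS {n : ℕ} (i : Fin n) (f : MvPowerSeries (Fin n) ℂ) :
    MvPowerSeries (Fin n) ℂ :=
  fun ν => ((ν i + 1 : ℕ) : ℂ) * MvPowerSeries.coeff (ν + Finsupp.single i 1) f

lemma degF_apply_le {n : ℕ} (ν : Fin n →₀ ℕ) (i : Fin n) : ν i ≤ degF ν := by
  by_cases h : ν i = 0
  · simp [h]
  · exact Finset.single_le_sum (f := fun j => ν j) (fun j _ => Nat.zero_le _)
      (Finsupp.mem_support_iff.mpr h)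

lemma coeff_leastPartD {n : ℕ} (f : MvPowerSeries (Fin n) ℂ) (d : ℕ) (μ : Fin n →₀ ℕ) :
    MvPolynomial.coeff μ (leastPartD f d)
      = if degF μ = d then MvPowerSeries.coeff μ f else 0 := by
  unfold leastPartD
  rw [MvPolynomial.coeff_sum]
  simp only [MvPolynomial.coeff_monomial]
  rw [Finset.sum_ite_eq' _ μ (fun ν => MvPowerSeries.coeff ν f)]
  by_cases h : degF μ = d
  · have hmem : μ ∈ (Finset.Iic ((Finsupp.equivFunOnFinite.symm fun _ => d) : Fin n →₀ ℕ)).filter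
        (fun ν => degF ν = d) := by
      refine Finset.mem_filter.mpr ⟨Finset.mem_Iic.mpr ?_, h⟩
      intro i
      simpa using h ▸ degF_apply_le μ i
    simp [hmem, h]
  · have : μ ∉ (Finset.Iic ((Finsupp.equivFunOnFinite.symm fun _ => d) : Fin n →₀ ℕ)).filter
        (fun ν => degF ν = d) := by
      intro hm
      exact h (Finset.mem_filter.mp hm).2
    simp [this, h]

lemma pairS_ne_zero {n : ℕ} (p : MvPolynomial (Fin n) ℂ) (g : MvPowerSeries (Fin n) ℂ) (D : ℕ)
    (hle : ∀ ν ∈ p.support, degF ν ≤ D)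
    (hlt : ∀ ν, degF ν < D → MvPowerSeries.coeff ν g = 0)
    (heq : ∀ ν, degF ν = D → MvPowerSeries.coeff ν g = MvPolynomial.coeff ν p)
    (hne : ∃ ν ∈ p.support, degF ν = D) :
    pairS p g ≠ 0 := by
  have hreal : pairS p g = ((∑ ν ∈ p.support,
      if degF ν = D then ((∏ i, Nat.factorial (ν i) : ℕ) : ℝ) *
        Complex.normSq (MvPolynomial.coeff ν p) else 0 : ℝ) : ℂ) := by
    rw [Complex.ofReal_sum]
    refine Finset.sum_congr rfl fun ν hν => ?_
    by_cases h : degF ν = D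
    · rw [if_pos h, heq ν h]
      rw [mul_assoc, Complex.mul_conj]
      push_cast
      ring
    · have : degF ν < D := lt_of_le_of_ne (hle ν hν) h
      rw [if_neg h, hlt ν this]
      simp
  rw [hreal]
  rw [Complex.ofReal_ne_zero]
  obtain ⟨ν₀, hν₀, hd₀⟩ := hne
  have hpos : (0:ℝ) < ∑ ν ∈ p.support,
      if degF ν = D then ((∏ i, Nat.factorial (ν i) : ℕ) : ℝ) *
        Complex.normSq (MvPolynomial.coeff ν p) else 0 := by
    refine Finset.sum_pos' (fun ν _ => ?_) ⟨ν₀, hν₀, ?_⟩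
    · by_cases h : degF ν = D
      · rw [if_pos h]
        have h1 : (0:ℝ) < ((∏ i, Nat.factorial (ν i) : ℕ) : ℝ) := by
          exact_mod_cast Finset.prod_pos fun i _ => (ν i).factorial_pos
        exact mul_nonneg h1.le (Complex.normSq_nonneg _)
      · rw [if_neg h]
    · rw [if_pos hd₀]
      have h1 : (0:ℝ) < ((∏ i, Nat.factorial (ν₀ i) : ℕ) : ℝ) := by
        exact_mod_cast Finset.prod_pos fun i _ => (ν₀ i).factorial_pos
      have h2 : (0:ℝ) < Complex.normSq (MvPolynomial.coeff ν₀ p) := by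
        rw [Complex.normSq_pos]
        exact MvPolynomial.mem_support_iff.mp hν₀
      exact mul_pos h1 h2
  exact ne_of_gt hpos

lemma ordPS_spec {n : ℕ} {f : MvPowerSeries (Fin n) ℂ} (hf : f ≠ 0) :
    (∃ ν, degF ν = ordPS f ∧ MvPowerSeries.coeff ν f ≠ 0) ∧
    (∀ ν, degF ν < ordPS f → MvPowerSeries.coeff ν f = 0) := by
  have hne : {d | ∃ ν, degF ν = d ∧ MvPowerSeries.coeff ν f ≠ 0}.Nonempty := by
    have : ∃ ν, MvPowerSeries.coeff ν f ≠ 0 := by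
      by_contra h
      push_neg at h
      exact hf (MvPowerSeries.ext h)
    obtain ⟨ν, hν⟩ := this
    exact ⟨degF ν, ν, rfl, hν⟩
  constructor
  · exact Nat.sInf_mem hne
  · intro ν hν
    by_contra h
    have : degF ν ∈ {d | ∃ ν, degF ν = d ∧ MvPowerSeries.coeff ν f ≠ 0} := ⟨ν, rfl, h⟩
    exact absurd (Nat.sInf_le this) (not_le.mpr hν)

lemma exists_flat {n : ℕ} (Z : Submodule ℂ (MvPowerSeries (Fin n) ℂ))
    {p : MvPolynomial (Fin n) ℂ} (hp : p ∈ leastSpace Z) (D : ℕ) :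
    ∃ g ∈ Z, (∀ ν, degF ν < D → MvPowerSeries.coeff ν g = 0) ∧
      (∀ ν, degF ν = D → MvPowerSeries.coeff ν g = MvPolynomial.coeff ν p) := by
  induction hp using Submodule.span_induction with
  | mem q hq =>
    obtain ⟨f, hfZ, rfl⟩ := hq
    by_cases hf : f = 0
    · refine ⟨0, Z.zero_mem, fun ν _ => by simp, fun ν hν => ?_⟩
      subst hf
      simp [leastPart, coeff_leastPartD]
    · by_cases hD : D = ordPS f
      · subst hD
        refine ⟨f, hfZ, fun ν hν => (ordPS_spec hf).2 ν hν, fun ν hν => ?_⟩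
        rw [leastPart, coeff_leastPartD, if_pos hν]
      · refine ⟨0, Z.zero_mem, fun ν _ => by simp, fun ν hν => ?_⟩
        rw [leastPart, coeff_leastPartD, if_neg (hν ▸ hD)]
        simp
  | zero => exact ⟨0, Z.zero_mem, fun ν _ => by simp, fun ν _ => by simp⟩
  | add q r _ _ ihq ihr =>
    obtain ⟨g, hgZ, hg1, hg2⟩ := ihq
    obtain ⟨h, hhZ, hh1, hh2⟩ := ihr
    refine ⟨g + h, Z.add_mem hgZ hhZ, fun ν hν => ?_, fun ν hν => ?_⟩
    · rw [map_add, hg1 ν hν, hh1 ν hν, add_zero]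
    · rw [map_add, hg2 ν hν, hh2 ν hν, MvPolynomial.coeff_add]
  | smul c q _ ihq =>
    obtain ⟨g, hgZ, hg1, hg2⟩ := ihq
    refine ⟨c • g, Z.smul_mem c hgZ, fun ν hν => ?_, fun ν hν => ?_⟩
    · rw [map_smul, hg1 ν hν, smul_zero]
    · rw [map_smul, hg2 ν hν, MvPolynomial.coeff_smul]

/-- de Boor–Ron: the restriction of S to Z↓ × Z is non-degenerate. -/
theorem stmt8 {n : ℕ} (Z : Submodule ℂ (MvPowerSeries (Fin n) ℂ))
    [FiniteDimensional ℂ Z] :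
    (∀ f ∈ Z, (∀ p ∈ leastSpace Z, pairS p f = 0) → f = 0) ∧
    (∀ p ∈ leastSpace Z, (∀ f ∈ Z, pairS p f = 0) → p = 0) := by
  constructor
  · intro f hfZ hpair
    by_contra hf
    obtain ⟨⟨ν₀, hν₀d, hν₀⟩, hord⟩ := ordPS_spec hf
    have hmem : leastPart f ∈ leastSpace Z :=
      Submodule.subset_span ⟨f, hfZ, rfl⟩
    refine pairS_ne_zero (leastPart f) f (ordPS f) ?_ hord ?_ ?_ (hpair _ hmem)
    · intro ν hν
      by_contra h
      have : MvPolynomial.coeff ν (leastPart f) = 0 := by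
        rw [leastPart, coeff_leastPartD, if_neg (fun he => h he.le)]
      exact MvPolynomial.mem_support_iff.mp hν this
    · intro ν hν
      rw [leastPart, coeff_leastPartD, if_pos hν]
    · refine ⟨ν₀, MvPolynomial.mem_support_iff.mpr ?_, hν₀d⟩
      rw [leastPart, coeff_leastPartD, if_pos hν₀d]
      exact hν₀
  · intro p hp hpair
    by_contra hpne
    set D := p.support.sup degF with hD
    obtain ⟨g, hgZ, hg1, hg2⟩ := exists_flat Z hp D
    have hsupp : p.support.Nonempty := by
      rwa [Finset.nonempty_iff_ne_empty, ne_eq, MvPolynomial.support_eq_empty]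
    obtain ⟨ν₀, hν₀, hν₀d⟩ := Finset.exists_mem_eq_sup p.support hsupp degF
    exact pairS_ne_zero p g D (fun ν hν => Finset.le_sup hν) hg1 hg2
      ⟨ν₀, hν₀, hν₀d.symm⟩ (hpair g hgZ)
end

section
/- Let Z be a finite-dimensional subspace of formal power series and Z↓ its least space. If the annihilator (Z↓)^⊥ with respect to the standard sesquilinear pairing is an ideal of the formal power series ring C[[t]], then Z↓ is D-invariant (closed under all partial derivatives ∂/∂τ_i). -/
section Aux

open MvPolynomial

variable {n : ℕ}

lemma pairS_eq_sum_subset (p : MvPolynomial (Fin n) ℂ) (f : MvPowerSeries (Fin n) ℂ)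
    (s : Finset (Fin n →₀ ℕ)) (hs : p.support ⊆ s) :
    pairS p f = ∑ ν ∈ s,
      ((∏ i, Nat.factorial (ν i) : ℕ) : ℂ) * MvPolynomial.coeff ν p *
        (starRingEnd ℂ) (MvPowerSeries.coeff ν f) := by
  unfold pairS
  refine Finset.sum_subset hs (fun ν _ hν => ?_)
  rw [MvPolynomial.notMem_support_iff] at hν
  simp [hν]

lemma pairS_add (p q : MvPolynomial (Fin n) ℂ) (f : MvPowerSeries (Fin n) ℂ) :
    pairS (p + q) f = pairS p f + pairS q f := by
  rw [pairS_eq_sum_subset p f (p.support ∪ q.support) Finset.subset_union_left,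
    pairS_eq_sum_subset q f (p.support ∪ q.support) Finset.subset_union_right,
    pairS_eq_sum_subset (p + q) f (p.support ∪ q.support)
      (MvPolynomial.support_add), ← Finset.sum_add_distrib]
  refine Finset.sum_congr rfl fun ν _ => ?_
  rw [MvPolynomial.coeff_add]; ring

lemma pairS_zero (f : MvPowerSeries (Fin n) ℂ) : pairS (0 : MvPolynomial (Fin n) ℂ) f = 0 := by
  unfold pairS
  simp

/-- `pairS · f` as an additive monoid hom. -/
noncomputable def pairHom (f : MvPowerSeries (Fin n) ℂ) : MvPolynomial (Fin n) ℂ →+ ℂ where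
  toFun p := pairS p f
  map_zero' := pairS_zero f
  map_add' p q := pairS_add p q f

lemma pairS_monomial (ν : Fin n →₀ ℕ) (c : ℂ) (f : MvPowerSeries (Fin n) ℂ) :
    pairS (MvPolynomial.monomial ν c) f =
      ((∏ i, Nat.factorial (ν i) : ℕ) : ℂ) * c * (starRingEnd ℂ) (MvPowerSeries.coeff ν f) := by
  rw [pairS_eq_sum_subset _ f {ν} (MvPolynomial.support_monomial_subset),
    Finset.sum_singleton, MvPolynomial.coeff_monomial, if_pos rfl]

set_option synthInstance.maxHeartbeats 1000000 in
/-- Double-annihilator style duality: power series separate polynomial subspaces. -/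
lemma dual_mem (W : Submodule ℂ (MvPolynomial (Fin n) ℂ)) (q : MvPolynomial (Fin n) ℂ)
    (h : ∀ f : MvPowerSeries (Fin n) ℂ, (∀ p ∈ W, pairS p f = 0) → pairS q f = 0) :
    q ∈ W := by
  by_contra hq
  have hq0 : (Submodule.Quotient.mk q : MvPolynomial (Fin n) ℂ ⧸ W) ≠ 0 := by
    simpa [Submodule.Quotient.mk_eq_zero] using hq
  have hex : ∃ φ : Module.Dual ℂ (MvPolynomial (Fin n) ℂ ⧸ W),
      φ (Submodule.Quotient.mk q) ≠ 0 := by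
    by_contra hc
    push_neg at hc
    exact hq0 ((Module.forall_dual_apply_eq_zero_iff ℂ _).mp hc)
  obtain ⟨φ, hφ⟩ := hex
  set ψ : MvPolynomial (Fin n) ℂ →ₗ[ℂ] ℂ := φ.comp W.mkQ with hψdef
  set f : MvPowerSeries (Fin n) ℂ :=
    fun ν => (starRingEnd ℂ) (ψ (MvPolynomial.monomial ν 1) / ((∏ i, Nat.factorial (ν i) : ℕ) : ℂ))
    with hfdef
  have hfact : ∀ ν : Fin n →₀ ℕ, ((∏ i, Nat.factorial (ν i) : ℕ) : ℂ) ≠ 0 := fun ν =>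
    Nat.cast_ne_zero.mpr (Finset.prod_pos fun i _ => Nat.factorial_pos _).ne'
  have key : ∀ p : MvPolynomial (Fin n) ℂ, pairS p f = ψ p := by
    intro p
    have : pairS p f = ∑ ν ∈ p.support, ψ (MvPolynomial.monomial ν (MvPolynomial.coeff ν p)) := by
      unfold pairS
      refine Finset.sum_congr rfl fun ν _ => ?_
      have : MvPowerSeries.coeff ν f =
          (starRingEnd ℂ) (ψ (MvPolynomial.monomial ν 1) /
            ((∏ i, Nat.factorial (ν i) : ℕ) : ℂ)) := rfl
      rw [this, RingHomCompTriple.comp_apply, RingHom.id_apply]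
      have hmono : (MvPolynomial.monomial ν (MvPolynomial.coeff ν p)) =
          (MvPolynomial.coeff ν p) • MvPolynomial.monomial ν 1 := by
        rw [MvPolynomial.smul_monomial, smul_eq_mul, mul_one]
      rw [hmono, map_smul, smul_eq_mul,
        mul_comm ((∏ i, Nat.factorial (ν i) : ℕ) : ℂ) (MvPolynomial.coeff ν p), mul_assoc,
        ← mul_div_assoc, mul_div_cancel_left₀ _ (hfact ν)]
    rw [this, ← map_sum, ← MvPolynomial.as_sum]
  have hf : ∀ p ∈ W, pairS p f = 0 := by
    intro p hp
    rw [key p, hψdef]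
    simp [(Submodule.Quotient.mk_eq_zero W).mpr hp, Submodule.mkQ_apply]
  have : pairS q f = 0 := h f hf
  rw [key q] at this
  exact hφ (by simpa [hψdef, Submodule.mkQ_apply] using this)

lemma fact_mul (ν : Fin n →₀ ℕ) (i : Fin n) (hν : ν i ≠ 0) :
    (ν i) * ∏ j, Nat.factorial ((ν - Finsupp.single i 1 : Fin n →₀ ℕ) j) =
      ∏ j, Nat.factorial (ν j) := by
  rw [← Finset.mul_prod_erase Finset.univ _ (Finset.mem_univ i),
    ← Finset.mul_prod_erase Finset.univ (fun j => Nat.factorial (ν j)) (Finset.mem_univ i),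
    ← mul_assoc]
  congr 1
  · have : (ν - Finsupp.single i 1 : Fin n →₀ ℕ) i = ν i - 1 := by
      rw [Finsupp.tsub_apply]; simp
    rw [this, Nat.mul_factorial_pred hν]
  · refine Finset.prod_congr rfl fun j hj => ?_
    have hji : j ≠ i := (Finset.mem_erase.mp hj).1
    have : (ν - Finsupp.single i 1 : Fin n →₀ ℕ) j = ν j := by
      rw [Finsupp.tsub_apply]; simp [Finsupp.single_apply, hji.symm]
    rw [this]

/-- The adjoint identity: `S(∂ᵢ p, f) = S(p, tᵢ f)`. -/
lemma pairS_pderiv (i : Fin n) (p : MvPolynomial (Fin n) ℂ) (f : MvPowerSeries (Fin n) ℂ) :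
    pairS (MvPolynomial.pderiv i p) f = pairS p (MvPowerSeries.X i * f) := by
  induction p using MvPolynomial.induction_on' with
  | monomial ν c =>
    rw [MvPolynomial.pderiv_monomial, pairS_monomial, pairS_monomial]
    have hcoeff : MvPowerSeries.coeff ν (MvPowerSeries.X i * f) =
        if Finsupp.single i 1 ≤ ν then MvPowerSeries.coeff (ν - Finsupp.single i 1) f
        else 0 := by
      rw [MvPowerSeries.X_def, MvPowerSeries.coeff_monomial_mul]
      split <;> simp
    by_cases hν : ν i = 0
    · have hle : ¬ Finsupp.single i 1 ≤ ν := by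
        intro hle
        have := hle i
        simp [Finsupp.single_apply, hν] at this
      rw [hcoeff, if_neg hle]
      simp [hν]
    · have hle : Finsupp.single i 1 ≤ ν := by
        intro j
        rcases eq_or_ne j i with rfl | hj
        · simpa [Finsupp.single_apply] using Nat.one_le_iff_ne_zero.mpr hν
        · simp [Finsupp.single_apply, hj.symm]
      rw [hcoeff, if_pos hle, ← fact_mul ν i hν]
      push_cast
      ring
  | add p q hp hq =>
    rw [map_add, pairS_add, pairS_add, hp, hq]

end Aux

/-- if the annihilator of Z↓ is an ideal of C[[t]] then Z↓ is D-invariant. -/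
theorem stmt10 {n : ℕ} (Z : Submodule ℂ (MvPowerSeries (Fin n) ℂ))
    [FiniteDimensional ℂ Z]
    (hIdeal : ∃ I : Ideal (MvPowerSeries (Fin n) ℂ),
      (I : Set (MvPowerSeries (Fin n) ℂ)) = {f | ∀ p ∈ leastSpace Z, pairS p f = 0}) :
    DInvP (leastSpace Z) := by
  obtain ⟨I, hI⟩ := hIdeal
  intro p hp i
  apply dual_mem
  intro f hf
  have hfI : f ∈ I := by
    rw [← SetLike.mem_coe, hI]; exact hf
  have hXfI : MvPowerSeries.X i * f ∈ I := I.mul_mem_left _ hfI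
  have h2 : ∀ r ∈ leastSpace Z, pairS r (MvPowerSeries.X i * f) = 0 := by
    rw [← SetLike.mem_coe, hI] at hXfI
    exact hXfI
  rw [pairS_pderiv]
  exact h2 p hp
end
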